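/- Let S be a finite extension of ℚ_2 with normalized valuation v and e = v(2), and let q be an integer with q ≡ 5 (mod 8) such that q is not a square in S. Then for every unit t of the valuation ring of S, the valuation v(1 − q·t²) is even. -/

import Mathlib

/-- The multiplicative value in `ℤₘ₀ = WithZero (Multiplicative ℤ)` corresponding to an element
of additive valuation `k ∈ ℤ`. -/
def ofVal (k : ℤ) : WithZero (Multiplicative ℤ) :=
  (Multiplicative.ofAdd (-k) : Multiplicative ℤ)

lemma ofVal_ne_zero (k : ℤ) : ofVal k ≠ 0 := WithZero.coe_ne_zero

lemma ofVal_mul (a b : ℤ) : ofVal a * ofVal b = ofVal (a + b) := by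
  rw [ofVal, ofVal, ofVal, ← WithZero.coe_mul, ← ofAdd_add, neg_add]

lemma ofVal_le_ofVal {a b : ℤ} : ofVal a ≤ ofVal b ↔ b ≤ a := by
  rw [ofVal, ofVal, WithZero.coe_le_coe, Multiplicative.ofAdd_le, neg_le_neg_iff]

lemma ofVal_lt_ofVal {a b : ℤ} : ofVal a < ofVal b ↔ b < a := by
  rw [ofVal, ofVal, WithZero.coe_lt_coe, Multiplicative.ofAdd_lt, neg_lt_neg_iff]

lemma ofVal_inj {a b : ℤ} : ofVal a = ofVal b ↔ a = b := by
  constructor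
  · intro h
    have h1 := le_antisymm_iff.mp h
    rw [ofVal_le_ofVal, ofVal_le_ofVal] at h1
    omega
  · rintro rfl; rfl

lemma ofVal_zero : ofVal 0 = 1 := by rw [ofVal, neg_zero, ofAdd_zero, WithZero.coe_one]

lemma ofVal_pow (a : ℤ) (n : ℕ) : ofVal a ^ n = ofVal (n * a) := by
  rw [ofVal, ofVal, ← WithZero.coe_pow, ← ofAdd_nsmul, nsmul_eq_mul]
  norm_num

lemma ofVal_zpow (a : ℤ) (n : ℤ) : ofVal a ^ n = ofVal (n * a) := by
  rw [ofVal, ofVal, ← WithZero.coe_zpow, ← ofAdd_zsmul, zsmul_eq_mul]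
  norm_num

lemma exists_ofVal {S : Type*} [Field S] (v : Valuation S (WithZero (Multiplicative ℤ)))
    {x : S} (hx : x ≠ 0) : ∃ j : ℤ, v x = ofVal j := by
  have h0 : v x ≠ 0 := by simpa [v.zero_iff] using hx
  obtain ⟨g, hg⟩ := WithZero.ne_zero_iff_exists.mp h0
  refine ⟨-Multiplicative.toAdd g, ?_⟩
  rw [← hg, ofVal, neg_neg, ofAdd_toAdd]

lemma toZMod_zero_iff (y : ℤ_[2]) : PadicInt.toZMod y = 0 ↔ ((2:ℕ) : ℤ_[2]) ∣ y := by
  rw [← Ideal.mem_span_singleton, ← PadicInt.maximalIdeal_eq_span_p,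
    ← PadicInt.ker_toZMod, RingHom.mem_ker]

lemma two_dvd_or (x : ℤ_[2]) : ((2:ℕ) : ℤ_[2]) ∣ x ∨ ((2:ℕ) : ℤ_[2]) ∣ (x - 1) := by
  have hd : ∀ a : ZMod 2, a = 0 ∨ a = 1 := by decide
  rcases hd (PadicInt.toZMod x) with h | h
  · left; rwa [toZMod_zero_iff] at h
  · right
    rw [← toZMod_zero_iff, map_sub, map_one, h, sub_self]

lemma unit_sq (c : ℤ_[2]) (hc : ‖c‖ = 1) : ‖c ^ 2 - 1‖ < 1 := by
  rw [PadicInt.norm_lt_one_iff_dvd]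
  have h2 : ¬ ((2:ℕ):ℤ_[2]) ∣ c := by
    rw [← PadicInt.norm_lt_one_iff_dvd, hc]; norm_num
  rcases two_dvd_or c with h | h
  · exact absurd h h2
  · have h3 : c ^ 2 - 1 = (c - 1) * (c + 1) := by ring
    rw [h3]
    exact Dvd.dvd.mul_right h _

lemma norm_three : ‖(3 : ℤ_[2])‖ = 1 := by
  refine le_antisymm (PadicInt.norm_le_one _) ?_
  by_contra h
  push_neg at h
  rw [PadicInt.norm_lt_one_iff_dvd, ← toZMod_zero_iff] at h
  rw [map_ofNat] at h
  exact absurd h (by decide)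

lemma cube_pow_root (n : ℕ) : ∀ x : ℤ_[2], ‖x - 1‖ < 1 →
    ∃ r : ℤ_[2], ‖r - 1‖ < 1 ∧ r ^ 3 ^ n = x := by
  induction n with
  | zero => exact fun x hx => ⟨x, hx, by rw [pow_zero, pow_one]⟩
  | succ n ih =>
    intro x hx
    set F : Polynomial ℤ_[2] := Polynomial.X ^ 3 - Polynomial.C x with hF
    have hFe : ∀ z, F.eval z = z ^ 3 - x := by intro z; simp [hF]
    have hFd : ∀ z, F.derivative.eval z = 3 * z ^ 2 := by
      intro z; simp [hF]; norm_num
    have hnorm : ‖F.eval 1‖ < ‖F.derivative.eval 1‖ ^ 2 := by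
      rw [hFe, hFd]
      simp only [one_pow, mul_one]
      rw [norm_three, one_pow, norm_sub_rev]
      simpa using hx
    obtain ⟨z, hz0, hz1, -, -⟩ := hensels_lemma hnorm
    rw [Polynomial.coe_aeval_eq_eval, hFe, sub_eq_zero] at hz0
    rw [Polynomial.coe_aeval_eq_eval, hFd] at hz1
    simp only [one_pow, mul_one, norm_three] at hz1
    obtain ⟨r, hr1, hrn⟩ := ih z hz1
    exact ⟨r, hr1, by rw [pow_succ, pow_mul, hrn, hz0]⟩

section ValS
variable {S : Type*} [Field S] [Algebra ℚ_[2] S]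
  (v : Valuation S (WithZero (Multiplicative ℤ)))

/-- Any 2-adic unit maps to a `v`-unit in `S`. -/
lemma val_unit (c : ℚ_[2]) (hc : ‖c‖ = 1) : v (algebraMap ℚ_[2] S c) = 1 := by
  have hc0 : c ≠ 0 := by intro h; rw [h] at hc; simp at hc
  have hcS0 : algebraMap ℚ_[2] S c ≠ 0 :=
    (map_ne_zero_iff _ (algebraMap ℚ_[2] S).injective).mpr hc0
  obtain ⟨jc, hjc⟩ := exists_ofVal v hcS0
  suffices h2jc : (2:ℤ) * jc = 0 by
    have : jc = 0 := by omega
    rw [hjc, this, ofVal_zero]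
  -- c as an element of ℤ_[2]
  set c₀ : ℤ_[2] := ⟨c, hc.le⟩ with hc₀
  have hc₀n : ‖c₀‖ = 1 := hc
  by_contra hne
  -- choose n with 3^n > |2 * jc|
  set K := (2:ℤ) * jc with hK
  obtain ⟨n, hn⟩ : ∃ n : ℕ, K.natAbs < 3 ^ n :=
    ⟨K.natAbs, Nat.lt_pow_self (by norm_num)⟩
  obtain ⟨r, hr1, hrn⟩ := cube_pow_root n (c₀ ^ 2) (unit_sq c₀ hc₀n)
  -- map r into S
  set f : ℤ_[2] →+* S := (algebraMap ℚ_[2] S).comp (PadicInt.Coe.ringHom) with hf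
  have hfc : f c₀ = algebraMap ℚ_[2] S c := rfl
  have hfr : (f r) ^ 3 ^ n = (algebraMap ℚ_[2] S c) ^ 2 := by
    rw [← map_pow, hrn, map_pow, hfc]
  have hr0 : f r ≠ 0 := by
    intro h
    rw [h, zero_pow (by positivity)] at hfr
    exact hcS0 (pow_eq_zero_iff (n := 2) (by norm_num) |>.mp hfr.symm)
  obtain ⟨jr, hjr⟩ := exists_ofVal v hr0
  have hval : v (f r) ^ 3 ^ n = v (algebraMap ℚ_[2] S c) ^ 2 := by
    rw [← map_pow v, ← map_pow v, hfr]
  rw [hjr, hjc, ofVal_pow, ofVal_pow, ofVal_inj] at hval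
  push_cast at hval
  have hdvd : (3:ℤ) ^ n ∣ K := ⟨jr, by rw [hK, ← hval]⟩
  have h1 : (3:ℤ) ^ n ≤ |K| := Int.le_of_dvd (abs_pos.mpr hne) ((dvd_abs _ _).mpr hdvd)
  have h2 : (K.natAbs : ℤ) < 3 ^ n := by exact_mod_cast hn
  rw [Int.abs_eq_natAbs] at h1
  linarith

/-- Small 2-adic elements map to `v`-small elements. -/
lemma val_small {e : ℤ} (he : v ((2:S)) = ofVal e) (he1 : 1 ≤ e)
    (N : ℕ) (c : ℚ_[2]) (hc : ‖c‖ ≤ (2:ℝ) ^ (-(N:ℤ))) :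
    v (algebraMap ℚ_[2] S c) ≤ ofVal (N : ℤ) := by
  by_cases hc0 : c = 0
  · rw [hc0, map_zero, map_zero]
    exact zero_le'
  · set val := c.valuation with hvaldef
    have hnorm := Padic.norm_eq_zpow_neg_valuation hc0
    have h2R : ((2:ℕ):ℝ) = (2:ℝ) := by norm_num
    have hval : (N:ℤ) ≤ val := by
      rw [hnorm, h2R] at hc
      have := (zpow_le_zpow_iff_right₀ (by norm_num : (1:ℝ) < 2)).mp hc
      omega
    set u := c / (2:ℚ_[2]) ^ val with hu_def
    have h2Q : ((2:ℕ):ℚ_[2]) = (2:ℚ_[2]) := by norm_num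
    have h2ne : (2:ℚ_[2]) ^ val ≠ 0 := zpow_ne_zero _ (by norm_num)
    have hu : ‖u‖ = 1 := by
      rw [hu_def, norm_div, hnorm, ← h2Q, Padic.norm_p_zpow, h2R]
      rw [div_self (by positivity)]
    have hcu : c = (2:ℚ_[2]) ^ val * u := by
      rw [hu_def, mul_div_cancel₀ _ h2ne]
    have halg2 : algebraMap ℚ_[2] S (2:ℚ_[2]) = (2:S) := map_ofNat _ 2
    calc v (algebraMap ℚ_[2] S c)
        = v ((2:S) ^ val) * v (algebraMap ℚ_[2] S u) := by
          rw [hcu, map_mul, map_mul, map_zpow₀, halg2]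
      _ = ofVal (val * e) := by
          rw [val_unit v u hu, mul_one, map_zpow₀, he, ofVal_zpow]
      _ ≤ ofVal (N : ℤ) := by
          rw [ofVal_le_ofVal]
          nlinarith

end ValS

open Filter Topology in
/-- Hensel's lemma for the quadratic `Z^2 + bZ + c` with `v b = 1` and `v c < 1`. -/
lemma quad_root {S : Type*} [Field S] [val : Valued S (WithZero (Multiplicative ℤ))]
    [CompleteSpace S] (h2 : Valued.v (2:S) ≤ 1) (b c : S)
    (hb : Valued.v b = 1) (hc : Valued.v c < 1) :
    ∃ z : S, z ^ 2 + b * z + c = 0 := by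
  by_cases hc0 : c = 0
  · exact ⟨0, by simp [hc0]⟩
  set w : Valuation S (WithZero (Multiplicative ℤ)) := Valued.v with hw
  set δ := w c with hδ
  have hδ1 : δ < 1 := hc
  set G : S → S := fun x => x ^ 2 + b * x + c with hG
  set z : ℕ → S := fun n => Nat.rec (0:S) (fun _ zn => zn - G zn / (2 * zn + b)) n with hz
  have hz0 : z 0 = 0 := rfl
  have hzs : ∀ n, z (n+1) = z n - G (z n) / (2 * z n + b) := fun n => rfl
  have hone : (1 : WithZero (Multiplicative ℤ)) ≠ 0 := one_ne_zero
  have hpowle : ∀ m : ℕ, δ ^ m ≤ 1 := fun m => pow_le_one' hδ1.le m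
  have hmono : ∀ a b : ℕ, a ≤ b → δ ^ b ≤ δ ^ a := by
    intro a b' hab
    calc δ ^ b' = δ ^ a * δ ^ (b' - a) := by rw [← pow_add]; congr 1; omega
    _ ≤ δ ^ a * 1 := mul_le_mul_right (hpowle _) _
    _ = δ ^ a := mul_one _
  have hδle : δ ^ 1 ≤ δ := le_of_eq (pow_one δ)
  have hinv : ∀ n, w (z n) ≤ δ ∧ w (G (z n)) ≤ δ ^ (n+1) := by
    intro n; induction n with
    | zero =>
      refine ⟨by rw [hz0, map_zero]; exact zero_le', ?_⟩
      have : G (z 0) = c := by rw [hz0]; simp [hG]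
      rw [this, pow_one]
    | succ n ih =>
      obtain ⟨h1, h2'⟩ := ih
      have hd2 : w (2 * z n) < 1 := by
        rw [map_mul]
        calc w (2:S) * w (z n) ≤ 1 * δ := mul_le_mul' h2 h1
        _ = δ := one_mul _
        _ < 1 := hδ1
      have hden : w (2 * z n + b) = 1 := by
        rw [Valuation.map_add_eq_of_lt_right _ (by rw [hb]; exact hd2), hb]
      have hdenne : (2 * z n + b) ≠ 0 := by
        intro h; rw [h, map_zero] at hden; exact hone hden.symm
      have hwd : w (G (z n) / (2 * z n + b)) = w (G (z n)) := by
        rw [map_div₀, hden, div_one]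
      have hGs : G (z (n+1)) = (G (z n) / (2 * z n + b)) ^ 2 := by
        rw [hzs n]
        have hmul : (2 * z n + b) * (G (z n) / (2 * z n + b)) = G (z n) := by
          field_simp
        calc G (z n - G (z n) / (2 * z n + b))
            = G (z n) - (2 * z n + b) * (G (z n) / (2 * z n + b))
              + (G (z n) / (2 * z n + b)) ^ 2 := by simp only [hG]; ring
        _ = (G (z n) / (2 * z n + b)) ^ 2 := by rw [hmul]; ring
      constructor
      · rw [hzs n]
        calc w (z n - G (z n) / (2 * z n + b))
            ≤ max (w (z n)) (w (G (z n) / (2 * z n + b))) := w.map_sub _ _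
        _ ≤ max δ (δ ^ (n+1)) := max_le_max h1 (by rw [hwd]; exact h2')
        _ = δ := by rw [max_eq_left]; exact le_trans (hmono 1 (n+1) (by omega)) hδle
      · rw [hGs, map_pow, hwd]
        calc w (G (z n)) ^ 2 ≤ (δ ^ (n+1)) ^ 2 := pow_le_pow_left' h2' 2
        _ = δ ^ (2*(n+1)) := by rw [← pow_mul]; ring_nf
        _ ≤ δ ^ (n+2) := hmono _ _ (by omega)
  have hden : ∀ n, w (2 * z n + b) = 1 := by
    intro n
    have h1 := (hinv n).1
    have hd2 : w (2 * z n) < 1 := by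
      rw [map_mul]
      calc w (2:S) * w (z n) ≤ 1 * δ := mul_le_mul' h2 h1
      _ = δ := one_mul _
      _ < 1 := hδ1
    rw [Valuation.map_add_eq_of_lt_right _ (by rw [hb]; exact hd2), hb]
  have hstep : ∀ n, w (z (n+1) - z n) ≤ δ ^ (n+1) := by
    intro n
    have : z (n+1) - z n = -(G (z n) / (2 * z n + b)) := by rw [hzs n]; ring
    rw [this, w.map_neg, map_div₀, hden n, div_one]
    exact (hinv n).2
  have hfar : ∀ n m, n ≤ m → w (z m - z n) ≤ δ ^ (n+1) := by
    intro n m hnm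
    induction m, hnm using Nat.le_induction with
    | base => rw [sub_self, map_zero]; exact zero_le'
    | succ m hm ih =>
      have : z (m+1) - z n = (z (m+1) - z m) + (z m - z n) := by ring
      rw [this]
      calc w _ ≤ max (w (z (m+1) - z m)) (w (z m - z n)) := w.map_add _ _
      _ ≤ max (δ ^ (m+1)) (δ ^ (n+1)) := max_le_max (hstep m) ih
      _ = δ ^ (n+1) := by rw [max_eq_right]; exact hmono _ _ (by omega)
  -- powers of δ become arbitrarily small
  obtain ⟨d0, hd0⟩ := exists_ofVal w hc0
  have hd01 : 0 < d0 := by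
    have h := hδ1
    rw [hδ, hd0, ← ofVal_zero] at h
    exact ofVal_lt_ofVal.mp h
  have hγ : ∀ γ : (WithZero (Multiplicative ℤ))ˣ,
      ∃ N : ℕ, δ ^ (N+1) < (γ : WithZero (Multiplicative ℤ)) := by
    intro γ
    obtain ⟨g, hg⟩ := WithZero.ne_zero_iff_exists.mp γ.ne_zero
    set T := Multiplicative.toAdd g with hT
    refine ⟨(-T).toNat, ?_⟩
    rw [hδ, hd0, ofVal_pow, ← hg,
      show (g : Multiplicative ℤ) = Multiplicative.ofAdd T by rw [hT, ofAdd_toAdd],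
      ofVal, WithZero.coe_lt_coe, Multiplicative.ofAdd_lt]
    have h1 : (-T) ≤ ((-T).toNat : ℤ) := Int.self_le_toNat _
    have h2 : (0:ℤ) ≤ ((-T).toNat : ℤ) := by positivity
    push_cast
    nlinarith [mul_nonneg (by linarith : (0:ℤ) ≤ ((-T).toNat : ℤ) + 1)
      (by linarith : (0:ℤ) ≤ d0 - 1)]
  have hcs : CauchySeq z := by
    rw [(Valued.hasBasis_uniformity S (WithZero (Multiplicative ℤ))).cauchySeq_iff]
    intro γ0 _
    let γ : (WithZero (Multiplicative ℤ))ˣ := Units.map (MonoidWithZeroHom.ValueGroup₀.embedding (f := MonoidWithZeroHom.ofClass (Valued.v : Valuation S (WithZero (Multiplicative ℤ))))) γ0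
    obtain ⟨N, hN⟩ := hγ γ
    refine ⟨N, fun m hm n hn => ?_⟩
    show Valued.v.restrict (z n - z m) < γ0.1
    rw [Valuation.restrict_lt_iff_lt_embedding]
    show w (z n - z m) < (γ : WithZero (Multiplicative ℤ))
    rcases le_total m n with h | h
    · exact lt_of_le_of_lt (le_trans (hfar m n h) (hmono _ _ (by omega))) hN
    · rw [show z n - z m = -(z m - z n) by ring, w.map_neg]
      exact lt_of_le_of_lt (le_trans (hfar n m h) (hmono _ _ (by omega))) hN
  obtain ⟨y, hy⟩ := cauchySeq_tendsto_of_complete hcs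
  have hGcont : Continuous G := by
    rw [hG]
    exact ((continuous_pow 2).add (continuous_const.mul continuous_id)).add continuous_const
  have hGy : Tendsto (fun n => G (z n)) atTop (𝓝 (G y)) :=
    (hGcont.continuousAt.tendsto).comp hy
  have hG0 : Tendsto (fun n => G (z n)) atTop (𝓝 (0:S)) := by
    rw [(Valued.hasBasis_nhds_zero S (WithZero (Multiplicative ℤ))).tendsto_right_iff]
    intro γ0 _
    let γ : (WithZero (Multiplicative ℤ))ˣ := Units.map (MonoidWithZeroHom.ValueGroup₀.embedding (f := MonoidWithZeroHom.ofClass (Valued.v : Valuation S (WithZero (Multiplicative ℤ))))) γ0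
    obtain ⟨N, hN⟩ := hγ γ
    filter_upwards [Filter.eventually_ge_atTop N] with m hm
    show Valued.v.restrict (G (z m)) < γ0.1
    rw [Valuation.restrict_lt_iff_lt_embedding]
    show w (G (z m)) < (γ : WithZero (Multiplicative ℤ))
    exact lt_of_le_of_lt (le_trans (hinv m).2 (hmono _ _ (by omega))) hN
  exact ⟨y, tendsto_nhds_unique hGy hG0⟩


open Topology Filter in
/-- Let `S` be a finite extension of `ℚ₂` with normalized valuation `v` and `e = v(2)`, and
let `q ≡ 5 (mod 8)` be an integer which is not a square in `S`.  Then for every unit `t` of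
the valuation ring of `S`, the additive valuation `v(1 - q·t²)` is even. -/
theorem stmt_5 {S : Type*} [Field S] [Algebra ℚ_[2] S] [FiniteDimensional ℚ_[2] S]
    (v : Valuation S (WithZero (Multiplicative ℤ)))
    (hsurj : Function.Surjective v)
    (e : ℤ) (he : v (2 : S) = ofVal e) (he1 : 1 ≤ e)
    (q : ℤ) (hq : q % 8 = 5) (hqsq : ¬∃ s : S, s ^ 2 = (q : S))
    (t : S) (ht : v t = 1) :
    ∃ k : ℤ, Even k ∧ v (1 - (q : S) * t ^ 2) = ofVal k := by
  classical
  have h2S : v (2:S) ≠ 0 := by rw [he]; exact ofVal_ne_zero e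
  have h2ne : (2:S) ≠ 0 := fun h => h2S (by rw [h, map_zero])
  -- set up the topology induced by `v` and show `S` is complete
  letI : Valued S (WithZero (Multiplicative ℤ)) := Valued.mk' v
  have hvv : (Valued.v : Valuation S (WithZero (Multiplicative ℤ))) = v := rfl
  haveI hT2 : T2Space S := inferInstance
  have halgcont : Continuous (algebraMap ℚ_[2] S) := by
    apply continuous_of_continuousAt_zero (algebraMap ℚ_[2] S)
    rw [ContinuousAt, map_zero]
    rw [(Valued.hasBasis_nhds_zero S (WithZero (Multiplicative ℤ))).tendsto_right_iff]
    intro γ0 _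
    let γ : (WithZero (Multiplicative ℤ))ˣ := Units.map (MonoidWithZeroHom.ValueGroup₀.embedding (f := MonoidWithZeroHom.ofClass (Valued.v : Valuation S (WithZero (Multiplicative ℤ))))) γ0
    obtain ⟨g, hg⟩ := WithZero.ne_zero_iff_exists.mp γ.ne_zero
    set T := Multiplicative.toAdd g with hT
    set N := (1 - T).toNat with hN
    have hofN : ofVal (N:ℤ) < (γ : WithZero (Multiplicative ℤ)) := by
      rw [← hg, show (g : Multiplicative ℤ) = Multiplicative.ofAdd T by rw [hT, ofAdd_toAdd],
        ofVal, WithZero.coe_lt_coe, Multiplicative.ofAdd_lt]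
      have : (1 - T) ≤ ((1-T).toNat : ℤ) := Int.self_le_toNat _
      omega
    have hball : {x : ℚ_[2] | ‖x‖ ≤ (2:ℝ)^(-(N:ℤ))} ∈ 𝓝 (0:ℚ_[2]) := by
      have hpos : (0:ℝ) < (2:ℝ)^(-(N:ℤ)) := by positivity
      have := Metric.closedBall_mem_nhds (0:ℚ_[2]) hpos
      refine Filter.mem_of_superset this ?_
      intro x hx
      simpa [Metric.mem_closedBall, dist_zero_right] using hx
    filter_upwards [hball] with x hx
    show Valued.v.restrict (algebraMap ℚ_[2] S x) < γ0.1
    rw [Valuation.restrict_lt_iff_lt_embedding]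
    exact lt_of_le_of_lt (val_small v he he1 N x hx) hofN
  haveI : ContinuousSMul ℚ_[2] S := by
    refine ⟨?_⟩
    have hsm : (fun p : ℚ_[2] × S => p.1 • p.2)
        = fun p : ℚ_[2] × S => (algebraMap ℚ_[2] S p.1) * p.2 := by
      funext p; rw [Algebra.smul_def]
    rw [hsm]
    exact (halgcont.comp continuous_fst).mul continuous_snd
  haveI : CompleteSpace S := by
    let bS := Module.finBasis ℚ_[2] S
    have h1 : Continuous bS.equivFun :=
      bS.equivFun.toLinearMap.continuous_of_finiteDimensional
    have h2 : Continuous bS.equivFun.symm :=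
      bS.equivFun.symm.toLinearMap.continuous_of_finiteDimensional
    have hemb : IsUniformEmbedding bS.equivFun := bS.equivFun.isUniformEmbedding h1 h2
    exact (completeSpace_congr (e := bS.equivFun.toEquiv) hemb).2 inferInstance
  -- integer arithmetic facts
  obtain ⟨j, hj⟩ : ∃ j : ℤ, q = 8*j + 5 := ⟨q / 8, by omega⟩
  set m : ℤ := 2*j + 1 with hm
  have hq4m : q = 4*m + 1 := by omega
  have hmodd : ¬ (2:ℤ) ∣ m := by omega
  have hqodd : ¬ (2:ℤ) ∣ q := by omega
  have hvint : ∀ n : ℤ, ¬(2:ℤ) ∣ n → v ((n:ℤ) : S) = 1 := by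
    intro n hn
    have hnorm : ‖((n:ℤ) : ℚ_[2])‖ = 1 := by
      refine le_antisymm (Padic.norm_int_le_one n) ?_
      by_contra hlt; push_neg at hlt
      rw [Padic.norm_intCast_lt_one_iff] at hlt
      exact hn (by exact_mod_cast hlt)
    rw [← map_intCast (algebraMap ℚ_[2] S)]
    exact val_unit v _ hnorm
  have hvm : v ((m : ℤ) : S) = 1 := hvint m hmodd
  have hvq : v ((q : ℤ) : S) = 1 := hvint q hqodd
  have hv4 : v (4:S) = ofVal (2*e) := by
    have h4 : (4:S) = 2*2 := by norm_num
    rw [h4, map_mul, he, ofVal_mul]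
    congr 1; ring
  have hqm : ((q : ℤ) : S) = 4*((m : ℤ):S) + 1 := by rw [hq4m]; push_cast; ring
  have hvq1 : v (((q : ℤ):S) - 1) = ofVal (2*e) := by
    have hid : ((q : ℤ):S) - 1 = (4:S) * ((m : ℤ):S) := by rw [hqm]; ring
    rw [hid, map_mul, hv4, hvm, mul_one]
  have ht0 : t ≠ 0 := by
    intro h; rw [h, map_zero] at ht; exact zero_ne_one ht
  set c := 1 - ((q : ℤ):S) * t^2 with hcdef
  have hc0 : c ≠ 0 := by
    intro h
    rw [hcdef] at h
    apply hqsq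
    refine ⟨t⁻¹, ?_⟩
    have h1 : ((q : ℤ):S) * t^2 = 1 := by linear_combination -h
    rw [inv_pow]
    exact inv_eq_of_mul_eq_one_left h1
  obtain ⟨k, hk⟩ := exists_ofVal v hc0
  refine ⟨k, ?_, hk⟩
  have hvD : v ((((q : ℤ):S) - 1) * t^2) = ofVal (2*e) := by
    rw [map_mul, map_pow, ht, one_pow, mul_one, hvq1]
  have hid2 : (1:S) - t^2 = c + (((q : ℤ):S) - 1) * t^2 := by rw [hcdef]; ring
  have hfac : ((1:S) - t) * ((1:S) + t) = 1 - t^2 := by ring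
  -- the flip lemma
  have flip : ∀ x y : S, x + y = 2 → ∀ a' : ℤ, a' < e → v x = ofVal a' → v y = ofVal a' := by
    intro x y hxy a' ha' hvx
    have hyx : y = 2 + (-x) := by rw [← hxy]; ring
    rw [hyx, Valuation.map_add_eq_of_lt_right _ (by
      rw [v.map_neg, hvx, he, ofVal_lt_ofVal]; exact ha'), v.map_neg, hvx]
  rcases lt_trichotomy k (2*e) with hke | hke | hke
  · -- k < 2e : v(1-t²) = ofVal k, factors give k = 2a
    have hsum : v ((1:S) - t^2) = ofVal k := by
      rw [hid2, Valuation.map_add_eq_of_lt_left _ (by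
        rw [hk, hvD, ofVal_lt_ofVal]; exact hke)]
      exact hk
    have h1t2 : (1:S) - t^2 ≠ 0 := by
      intro h; rw [h, map_zero] at hsum; exact (ofVal_ne_zero k) hsum.symm
    have h1t : (1:S) - t ≠ 0 := by
      intro h; apply h1t2; rw [← hfac, h, zero_mul]
    have h1t' : (1:S) + t ≠ 0 := by
      intro h; apply h1t2; rw [← hfac, h, mul_zero]
    obtain ⟨a, ha⟩ := exists_ofVal v h1t
    obtain ⟨b, hb⟩ := exists_ofVal v h1t'
    have hab : a + b = k := by
      have hv2 := congrArg v hfac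
      rw [map_mul, ha, hb, ofVal_mul, hsum] at hv2
      exact ofVal_inj.mp hv2
    rcases lt_or_ge a e with hae | hae
    · have hflip := flip (1-t) (1+t) (by ring) a hae ha
      have hba : b = a := ofVal_inj.mp (hflip.symm.trans hb).symm
      exact ⟨a, by omega⟩
    · rcases lt_or_ge b e with hbe | hbe
      · have hflip := flip (1+t) (1-t) (by ring) b hbe hb
        have hba : a = b := ofVal_inj.mp (ha.symm.trans hflip)
        exfalso; omega
      · exfalso; omega
  · exact ⟨e, by omega⟩
  · -- k > 2e : contradiction with q not a square
    exfalso
    have hsum : v ((1:S) - t^2) = ofVal (2*e) := by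
      rw [hid2, Valuation.map_add_eq_of_lt_right _ (by
        rw [hk, hvD, ofVal_lt_ofVal]; exact hke)]
      exact hvD
    have h1t2 : (1:S) - t^2 ≠ 0 := by
      intro h; rw [h, map_zero] at hsum; exact (ofVal_ne_zero _) hsum.symm
    have h1t : (1:S) - t ≠ 0 := by
      intro h; apply h1t2; rw [← hfac, h, zero_mul]
    have h1t' : (1:S) + t ≠ 0 := by
      intro h; apply h1t2; rw [← hfac, h, mul_zero]
    obtain ⟨a, ha⟩ := exists_ofVal v h1t
    obtain ⟨b, hb⟩ := exists_ofVal v h1t'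
    have hab : a + b = 2*e := by
      have hv2 := congrArg v hfac
      rw [map_mul, ha, hb, ofVal_mul, hsum] at hv2
      exact ofVal_inj.mp hv2
    have hae : a = e := by
      rcases lt_or_ge a e with h' | h'
      · have hflip := flip (1-t) (1+t) (by ring) a h' ha
        have hba : b = a := ofVal_inj.mp (hflip.symm.trans hb).symm
        omega
      · rcases lt_or_ge b e with h'' | h''
        · have hflip := flip (1+t) (1-t) (by ring) b h'' hb
          have hba : a = b := ofVal_inj.mp (ha.symm.trans hflip)
          omega
        · omega
    set h := (t - 1) / 2 with hhdef
    have hth : t = 1 + 2*h := by rw [hhdef]; field_simp; ring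
    have hvh : v h = 1 := by
      have hvt1 : v (t - 1) = ofVal e := by
        rw [show t - 1 = -((1:S)-t) by ring, v.map_neg, ha, hae]
      rw [hhdef, map_div₀, he, hvt1]
      exact div_self (ofVal_ne_zero e)
    set g := h^2 + h + ((m : ℤ):S) + 4*(((m : ℤ):S)*(h + h^2)) with hgdef
    have hgc : c = -(4 * g) := by
      rw [hcdef, hgdef, hth, hqm]; ring
    have hg0 : g ≠ 0 := by
      intro hgz; apply hc0; rw [hgc, hgz, mul_zero, neg_zero]
    obtain ⟨kg, hkg⟩ := exists_ofVal v hg0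
    have hkgval : kg = k - 2*e := by
      have hv3 := hk
      rw [hgc, v.map_neg, map_mul, hv4, hkg, ofVal_mul] at hv3
      have := ofVal_inj.mp hv3
      omega
    have hvF : v (h^2 + h - ((m : ℤ):S)) < 1 := by
      have hidF : h^2 + h - ((m : ℤ):S)
          = g + (-(2*((m : ℤ):S)) + -(4*(((m : ℤ):S)*(h+h^2)))) := by
        rw [hgdef]; ring
      rw [hidF]
      refine lt_of_le_of_lt (v.map_add _ _) (max_lt ?_ ?_)
      · rw [hkg, hkgval, ← ofVal_zero, ofVal_lt_ofVal]; omega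
      · refine lt_of_le_of_lt (v.map_add _ _) (max_lt ?_ ?_)
        · rw [v.map_neg, map_mul, he, hvm, mul_one, ← ofVal_zero, ofVal_lt_ofVal]; omega
        · rw [v.map_neg, map_mul, hv4]
          have hbound : v (((m : ℤ):S)*(h+h^2)) ≤ 1 := by
            rw [map_mul, hvm, one_mul]
            refine le_trans (v.map_add _ _) ?_
            rw [map_pow, hvh, one_pow]
            simp
          calc ofVal (2*e) * v (((m : ℤ):S)*(h+h^2)) ≤ ofVal (2*e) * 1 :=
                mul_le_mul_right hbound _
            _ = ofVal (2*e) := mul_one _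
            _ < 1 := by rw [← ofVal_zero, ofVal_lt_ofVal]; omega
    have h2le : Valued.v (2:S) ≤ 1 := by
      rw [hvv, he, ← ofVal_zero, ofVal_le_ofVal]; omega
    obtain ⟨z, hz⟩ := quad_root h2le t (h^2 + h - ((m : ℤ):S))
      (by rw [hvv]; exact ht) (by rw [hvv]; exact hvF)
    apply hqsq
    refine ⟨1 + 2*(h + z), ?_⟩
    rw [hqm]
    linear_combination (4:S)*hz - (4*z)*hth
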